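/- Let V : [0,1] × [0,1] → ℝ be convex in its first argument and satisfy V(θ₁,θ₂) + V(θ₂,θ₁) ≤ V(θ₁,θ₁) + V(θ₂,θ₂) for all θ₁, θ₂ ∈ [0,1]. Then for all θ₁ < θ₂ in [0,1] and all ρ ∈ (0,1), letting a = ρθ₁ + (1−ρ)θ₂: ρ·V(a, θ₁) + (1−ρ)·V(a, θ₂) ≤ ρ·V(θ₁,θ₁) + (1−ρ)·V(θ₂,θ₂). -/
import Mathlib

/-- Full-disclosure inequality in the simple receiver case: if `V` is convex in its first
argument and satisfies the diagonal-dominance condition, then pooling is (weakly) worse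
than full disclosure. -/
theorem stmt_7 (V : ℝ → ℝ → ℝ)
    (hconv : ∀ θ ∈ Set.Icc (0:ℝ) 1, ConvexOn ℝ (Set.Icc (0:ℝ) 1) (fun a => V a θ))
    (hsub : ∀ θ₁ ∈ Set.Icc (0:ℝ) 1, ∀ θ₂ ∈ Set.Icc (0:ℝ) 1,
      V θ₁ θ₂ + V θ₂ θ₁ ≤ V θ₁ θ₁ + V θ₂ θ₂)
    (θ₁ θ₂ : ℝ) (hθ₁ : θ₁ ∈ Set.Icc (0:ℝ) 1) (hθ₂ : θ₂ ∈ Set.Icc (0:ℝ) 1)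
    (hlt : θ₁ < θ₂) (ρ : ℝ) (hρ : ρ ∈ Set.Ioo (0:ℝ) 1) :
    ρ * V (ρ * θ₁ + (1 - ρ) * θ₂) θ₁ + (1 - ρ) * V (ρ * θ₁ + (1 - ρ) * θ₂) θ₂ ≤
      ρ * V θ₁ θ₁ + (1 - ρ) * V θ₂ θ₂ := by
  obtain ⟨hρ0, hρ1⟩ := hρ
  have hρ0' : (0:ℝ) ≤ ρ := hρ0.le
  have h1ρ : (0:ℝ) ≤ 1 - ρ := by linarith
  have hsum : ρ + (1 - ρ) = 1 := by ring
  have hc1 := (hconv θ₁ hθ₁).2 hθ₁ hθ₂ hρ0' h1ρ hsum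
  have hc2 := (hconv θ₂ hθ₂).2 hθ₁ hθ₂ hρ0' h1ρ hsum
  simp only [smul_eq_mul] at hc1 hc2
  have hs := hsub θ₁ hθ₁ θ₂ hθ₂
  nlinarith [mul_nonneg hρ0' h1ρ, mul_le_mul_of_nonneg_left hc1 hρ0',
    mul_le_mul_of_nonneg_left hc2 h1ρ, mul_le_mul_of_nonneg_left hs (mul_nonneg hρ0' h1ρ)]
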